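/- Let G be a connected locally finite graph of subexponential growth, i.e., for every c > 1 the growth function satisfies β(n) < c^n for all sufficiently large n. Then G does not contain a subgraph which is a bounded-degree tree with positive Cheeger constant. In particular, the Cayley graph of a finitely generated group of intermediate (hence subexponential) growth contains no tree with positive Cheeger constant. -/

import Mathlib

universe u

/-- A map between the vertex sets of two graphs (each vertex set carrying the combinatorial
metric `SimpleGraph.dist`) is a quasi-isometry. -/
def GraphQuasiIsometry {V : Type*} {V' : Type*} (G : SimpleGraph V) (G' : SimpleGraph V')
    (f : V → V') : Prop :=
  ∃ lam ε K : ℝ, 1 ≤ lam ∧ 0 ≤ ε ∧ 0 ≤ K ∧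
    (∀ x y : V,
      lam⁻¹ * (G.dist x y : ℝ) - ε ≤ (G'.dist (f x) (f y) : ℝ) ∧
      (G'.dist (f x) (f y) : ℝ) ≤ lam * (G.dist x y : ℝ) + ε) ∧
    (∀ v' : V', ∃ x : V, (G'.dist v' (f x) : ℝ) ≤ K)

/-- Two graphs are quasi-isometric (with their combinatorial metrics). -/
def QuasiIsometric {V V' : Type*} (G : SimpleGraph V) (G' : SimpleGraph V') : Prop :=
  ∃ f : V → V', GraphQuasiIsometry G G' f

/-- `G` has polynomial containment of degree at most `d`. -/
def HasPolyContainment {V : Type*} (G : SimpleGraph V) (d : ℕ) : Prop :=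
  ∃ C : ℝ, 0 < C ∧
    ∀ X₀ : Set V, X₀.Finite →
      ∃ (W : ℕ → Set V) (X : ℕ → Set V),
        X 0 = X₀ ∧
        (∀ n : ℕ, 1 ≤ n → (W n).Finite ∧ ((W n).ncard : ℝ) ≤ C * (n : ℝ) ^ d) ∧
        (∀ n : ℕ, X (n + 1) =
          {v : V | ∃ u ∈ X n, v = u ∨ G.Adj u v} \ (⋃ k ∈ Finset.Icc 1 (n + 1), W k)) ∧
        (∀ n : ℕ, Disjoint (X n) (W (n + 1))) ∧
        (∃ T : ℕ, 0 < T ∧ ∀ n : ℕ, T ≤ n → X n = X T)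

/-- `G` has all vertex degrees bounded above by some `D`. -/
def BoundedDegree {V : Type*} (G : SimpleGraph V) : Prop :=
  ∃ D : ℕ, ∀ v : V, (G.neighborSet v).Finite ∧ (G.neighborSet v).ncard ≤ D

/-- Number of vertices at distance at most `n` from the base vertex `g₀`. -/
noncomputable def growthFunction {V : Type*} (G : SimpleGraph V) (g₀ : V) (n : ℕ) : ℕ :=
  {v : V | G.dist g₀ v ≤ n}.ncard

/-- Edges of `G` with exactly one endpoint in `K`. -/
def edgeBoundary {V : Type*} (G : SimpleGraph V) (K : Set V) : Set (Sym2 V) :=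
  {e ∈ G.edgeSet | ∃ u v : V, e = s(u, v) ∧ u ∈ K ∧ v ∉ K}

/-- Cheeger constant of a graph. -/
noncomputable def cheegerConstant {V : Type*} (G : SimpleGraph V) : ℝ :=
  sInf {r : ℝ | ∃ K : Set V, K.Finite ∧ K.Nonempty ∧
    r = ((edgeBoundary G K).ncard : ℝ) / (K.ncard : ℝ)}

/-- Cayley graph of a group with respect to a set `S`. -/
def cayleyGraph (Γ : Type*) [Group Γ] (S : Set Γ) : SimpleGraph Γ :=
  SimpleGraph.fromRel (fun g h => ∃ s ∈ S, h = g * s)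

/-- Word length of `g` with respect to `S`. -/
noncomputable def wordLength {Γ : Type*} [Group Γ] (S : Set Γ) (g : Γ) : ℕ :=
  sInf {n : ℕ | ∃ l : List Γ, l.length = n ∧ (∀ x ∈ l, x ∈ S ∪ S⁻¹) ∧ l.prod = g}

def VirtuallyNilpotent (Γ : Type*) [Group Γ] : Prop :=
  ∃ H : Subgroup Γ, H.FiniteIndex ∧ Group.IsNilpotent H

/-- The infinite `δ`-regular tree. -/
def IsRegularTree {U : Type*} (T : SimpleGraph U) (δ : ℕ) : Prop :=
  Infinite U ∧ T.IsTree ∧ ∀ v : U, (T.neighborSet v).Finite ∧ (T.neighborSet v).ncard = δ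

/-- `a` and `b` generate a free semigroup of rank two. -/
def GeneratesFreeSemigroup {Γ : Type*} [Group Γ] (a b : Γ) : Prop :=
  Function.Injective
    (FreeSemigroup.lift (fun x : Bool => if x then a else b) : FreeSemigroup Bool →ₙ* Γ)

/-- Elementary amenable groups: the smallest class containing finite and abelian groups and
closed under subgroups, quotients, extensions and directed unions. -/
inductive ElementaryAmenable : (G : Type u) → [inst : Group G] → Prop
  | finite (G : Type u) [Group G] [Finite G] : ElementaryAmenable G
  | abelian (G : Type u) [Group G] (h : ∀ a b : G, a * b = b * a) : ElementaryAmenable G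
  | subgroup {G H : Type u} [Group G] [Group H] (f : H →* G) (hf : Function.Injective f)
      (hG : ElementaryAmenable G) : ElementaryAmenable H
  | quotient {G H : Type u} [Group G] [Group H] (f : G →* H) (hf : Function.Surjective f)
      (hG : ElementaryAmenable G) : ElementaryAmenable H
  | extension {G : Type u} [Group G] (N : Subgroup G) [N.Normal]
      (hN : ElementaryAmenable N) (hQ : ElementaryAmenable (G ⧸ N)) : ElementaryAmenable G
  | directedUnion {G : Type u} [Group G] {ι : Type u} (H : ι → Subgroup G)
      (hdir : ∀ i j, ∃ k, H i ≤ H k ∧ H j ≤ H k)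
      (hunion : ∀ g : G, ∃ i, g ∈ H i)
      (hEA : ∀ i, ElementaryAmenable (H i)) : ElementaryAmenable G

open SimpleGraph in
/-- Approximation of the ball of radius `n` around `x`. -/
private def ballApprox {V : Type*} (G : SimpleGraph V) (x : V) : ℕ → Set V
  | 0 => {x}
  | n + 1 => ballApprox G x n ∪ ⋃ u ∈ ballApprox G x n, G.neighborSet u

private lemma ball_finite_aux {V : Type*} (G : SimpleGraph V) (hc : G.Preconnected)
    (hlf : ∀ v : V, (G.neighborSet v).Finite) (x : V) (n : ℕ) :
    {v : V | G.dist x v ≤ n}.Finite := by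
  have hSfin : ∀ n, (ballApprox G x n).Finite := by
    intro n
    induction n with
    | zero => exact Set.finite_singleton x
    | succ n ih => exact ih.union (Set.Finite.biUnion ih fun u _ => hlf u)
  have hx : ∀ n, x ∈ ballApprox G x n := by
    intro n
    induction n with
    | zero => exact rfl
    | succ n ih => exact Or.inl ih
  have hwalk : ∀ n (v : V) (p : G.Walk v x), p.length ≤ n → v ∈ ballApprox G x n := by
    intro n
    induction n with
    | zero =>
      intro v p hp
      cases p with
      | nil => exact rfl
      | cons h q => simp at hp
    | succ n ih =>
      intro v p hp
      cases p with
      | nil => exact hx (n + 1)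
      | @cons _ w _ h q =>
        have hw : w ∈ ballApprox G x n := ih w q (by simpa using Nat.le_of_succ_le_succ hp)
        exact Or.inr (Set.mem_biUnion hw h.symm)
  refine (hSfin n).subset ?_
  intro v hv
  obtain ⟨p, hp⟩ := (hc v x).exists_walk_length_eq_dist
  exact hwalk n v p (by rw [hp, G.dist_comm]; exact hv)

private lemma ncard_biUnion_le' {α β : Type*} {A : Set α} (hA : A.Finite)
    (f : α → Set β) (D : ℕ) (hf : ∀ a, (f a).ncard ≤ D) :
    (⋃ a ∈ A, f a).ncard ≤ A.ncard * D := by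
  refine Set.Finite.induction_on (motive := fun A _ => (⋃ a ∈ A, f a).ncard ≤ A.ncard * D) A hA (by simp) ?_
  intro a s ha hs ih
  rw [Set.biUnion_insert]
  calc (f a ∪ ⋃ x ∈ s, f x).ncard ≤ (f a).ncard + (⋃ x ∈ s, f x).ncard :=
        Set.ncard_union_le _ _
    _ ≤ D + s.ncard * D := add_le_add (hf a) ih
    _ = (insert a s).ncard * D := by rw [Set.ncard_insert_of_notMem ha hs]; ring

/-- a connected locally finite graph of subexponential growth contains no
bounded-degree tree subgraph with positive Cheeger constant. -/
theorem subexponential_growth_no_positive_cheeger_tree {V : Type u} (G : SimpleGraph V)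
    (hconn : G.Connected) (hlf : G.LocallyFinite) (g₀ : V)
    (hsub : ∀ c : ℝ, 1 < c → ∃ N : ℕ, ∀ n : ℕ, N ≤ n →
      ((growthFunction G g₀ n : ℝ) < c ^ n)) :
    ¬ ∃ H : G.Subgraph, H.coe.IsTree ∧ BoundedDegree H.coe ∧
        0 < cheegerConstant H.coe := by
  rintro ⟨H, htree, ⟨D, hD⟩, hpos⟩
  classical
  set T : SimpleGraph H.verts := H.coe with hTdef
  have hTconn : T.Connected := htree.isConnected
  obtain ⟨u₀⟩ := hTconn.nonempty
  have hGlf : ∀ v : V, (G.neighborSet v).Finite := by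
    intro v; haveI := hlf v; exact (G.neighborSet v).toFinite
  have hGball : ∀ n : ℕ, {v : V | G.dist g₀ v ≤ n}.Finite :=
    ball_finite_aux G hconn.preconnected hGlf g₀
  set m : ℕ := G.dist g₀ (u₀ : V) with hm
  -- tree distance dominates G distance
  have hdistle : ∀ v : H.verts, G.dist (u₀ : V) (v : V) ≤ T.dist u₀ v := by
    intro v
    obtain ⟨p, hp⟩ := hTconn.exists_walk_length_eq_dist u₀ v
    have h1 : G.dist (u₀ : V) (v : V) ≤ (p.map H.hom).length := SimpleGraph.dist_le _
    rwa [SimpleGraph.Walk.length_map, hp] at h1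
  set B : ℕ → Set H.verts := fun n => {v | T.dist u₀ v ≤ n} with hBdef
  have hBmap : ∀ n : ℕ, (Subtype.val '' B n) ⊆ {w : V | G.dist g₀ w ≤ m + n} := by
    rintro n _ ⟨v, hv, rfl⟩
    have h1 : G.dist g₀ (v : V) ≤ G.dist g₀ (u₀ : V) + G.dist (u₀ : V) (v : V) :=
      hconn.dist_triangle
    have h2 : T.dist u₀ v ≤ n := hv
    have h3 := hdistle v
    simp only [Set.mem_setOf_eq, hm]
    omega
  have hBfin : ∀ n : ℕ, (B n).Finite := by
    intro n
    have hsub : B n ⊆ Subtype.val ⁻¹' {w : V | G.dist g₀ w ≤ m + n} :=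
      fun v hv => hBmap n ⟨v, hv, rfl⟩
    exact (((hGball (m + n)).preimage Subtype.val_injective.injOn).subset hsub)
  have hBle : ∀ n : ℕ, ((B n).ncard : ℝ) ≤ (growthFunction G g₀ (m + n) : ℝ) := by
    intro n
    have h1 : (B n).ncard = (Subtype.val '' B n).ncard :=
      (Set.ncard_image_of_injective _ Subtype.val_injective).symm
    have h2 : (Subtype.val '' B n).ncard ≤ growthFunction G g₀ (m + n) :=
      Set.ncard_le_ncard (hBmap n) (hGball (m + n))
    exact_mod_cast h1 ▸ h2
  set h : ℝ := cheegerConstant T with hh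
  -- Cheeger inequality
  have hcheeger : ∀ K : Set H.verts, K.Finite → K.Nonempty →
      h * (K.ncard : ℝ) ≤ ((edgeBoundary T K).ncard : ℝ) := by
    intro K hKfin hKne
    have hle : h ≤ ((edgeBoundary T K).ncard : ℝ) / (K.ncard : ℝ) := by
      rw [hh, cheegerConstant]
      apply csInf_le
      · refine ⟨0, ?_⟩
        rintro r ⟨K', hK1, hK2, rfl⟩
        positivity
      · exact ⟨K, hKfin, hKne, rfl⟩
    have hKpos : (0 : ℝ) < (K.ncard : ℝ) := by
      exact_mod_cast (Set.ncard_pos hKfin).mpr hKne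
    rwa [le_div_iff₀ hKpos] at hle
  -- counting boundary edges through their inner endpoints
  have hcount : ∀ K A : Set H.verts, A.Finite →
      (∀ u v : H.verts, T.Adj u v → u ∈ K → v ∉ K → u ∈ A) →
      (edgeBoundary T K).ncard ≤ A.ncard * D := by
    intro K A hAfin hin
    have hsub : edgeBoundary T K ⊆ ⋃ a ∈ A, (fun w => s(a, w)) '' T.neighborSet a := by
      rintro e ⟨he, u, v, rfl, hu, hv⟩
      rw [SimpleGraph.mem_edgeSet] at he
      exact Set.mem_biUnion (hin u v he hu hv) ⟨v, he, rfl⟩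
    calc (edgeBoundary T K).ncard
        ≤ (⋃ a ∈ A, (fun w => s(a, w)) '' T.neighborSet a).ncard :=
          Set.ncard_le_ncard hsub (hAfin.biUnion fun a _ => ((hD a).1.image _))
      _ ≤ A.ncard * D := ncard_biUnion_le' hAfin _ D
          (fun a => le_trans (Set.ncard_image_le (hD a).1) (hD a).2)
  set a : ℕ → ℝ := fun n => ((B n).ncard : ℝ) with hadef
  have hB0 : B 0 = {u₀} := by
    ext v
    simp only [hBdef, Set.mem_setOf_eq, Set.mem_singleton_iff, Nat.le_zero]
    constructor
    · intro h0
      rcases SimpleGraph.dist_eq_zero_iff_eq_or_not_reachable.mp h0 with h1 | h1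
      · exact h1.symm
      · exact absurd (hTconn.preconnected u₀ v) h1
    · rintro rfl
      exact SimpleGraph.dist_self
  have ha0 : a 0 = 1 := by
    simp [hadef, hB0]
  have hanonneg : ∀ n, 0 ≤ a n := fun n => Nat.cast_nonneg _
  have hu₀mem : ∀ n, u₀ ∈ B n := by
    intro n
    show T.dist u₀ u₀ ≤ n
    simp [SimpleGraph.dist_self]
  have hsphere : ∀ n : ℕ, ∀ u v : H.verts, T.Adj u v → u ∈ B (n + 1) → v ∉ B (n + 1) →
      u ∈ B (n + 1) \ B n := by
    intro n u v hadj hu hv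
    refine ⟨hu, fun hun => hv ?_⟩
    have h1 : T.dist u₀ v ≤ T.dist u₀ u + T.dist u v := hTconn.dist_triangle
    have h2 : T.dist u v = 1 := SimpleGraph.dist_eq_one_iff_adj.mpr hadj
    have h3 : T.dist u₀ u ≤ n := hun
    show T.dist u₀ v ≤ n + 1
    omega
  have hBmono : ∀ n : ℕ, B n ⊆ B (n + 1) := by
    intro n v hv
    have : T.dist u₀ v ≤ n := hv
    show T.dist u₀ v ≤ n + 1
    omega
  have hkey : ∀ n : ℕ, (D : ℝ) * a n ≤ ((D : ℝ) - h) * a (n + 1) := by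
    intro n
    have h1 := hcheeger (B (n + 1)) (hBfin _) ⟨u₀, hu₀mem _⟩
    have h2 := hcount (B (n + 1)) (B (n + 1) \ B n) ((hBfin _).diff)
      (fun u v hadj hu hv => hsphere n u v hadj hu hv)
    have h3 : ((B (n + 1) \ B n).ncard : ℝ) = a (n + 1) - a n :=
      Set.cast_ncard_sdiff (hBmono n) (hBfin _)
    have h2' : ((edgeBoundary T (B (n + 1))).ncard : ℝ) ≤ ((B (n + 1) \ B n).ncard : ℝ) * D := by
      exact_mod_cast h2
    rw [h3] at h2'
    linarith
  have hDpos : (0 : ℝ) < (D : ℝ) := by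
    have h1 := hcheeger {u₀} (Set.finite_singleton _) ⟨u₀, rfl⟩
    have h2 := hcount {u₀} {u₀} (Set.finite_singleton _) (fun u v _ hu _ => hu)
    have h2' : ((edgeBoundary T {u₀}).ncard : ℝ) ≤ ((({u₀} : Set H.verts).ncard : ℕ) : ℝ) * D := by
      exact_mod_cast h2
    simp only [Set.ncard_singleton, Nat.cast_one, one_mul, mul_one] at h1 h2'
    linarith
  have hDh : (0 : ℝ) < (D : ℝ) - h := by
    have h1 := hkey 0
    rw [ha0] at h1
    by_contra hcon
    push_neg at hcon
    nlinarith [hanonneg 1]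
  set c : ℝ := (D : ℝ) / ((D : ℝ) - h) with hc
  have hc1 : 1 < c := (one_lt_div hDh).mpr (by linarith)
  have hgrow : ∀ n : ℕ, c ^ n ≤ a n := by
    intro n
    induction n with
    | zero => simp [ha0]
    | succ n ih =>
      have hstep : c * a n ≤ a (n + 1) := by
        rw [hc, div_mul_eq_mul_div, div_le_iff₀ hDh]
        have := hkey n
        linarith
      calc c ^ (n + 1) = c * c ^ n := by ring
        _ ≤ c * a n := by
            have : (0 : ℝ) < c := by linarith
            nlinarith [ih]
        _ ≤ a (n + 1) := hstep
  obtain ⟨N, hN⟩ := hsub (Real.sqrt c) (by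
    rw [show (1 : ℝ) = Real.sqrt 1 from Real.sqrt_one.symm]
    exact Real.sqrt_lt_sqrt (by norm_num) hc1)
  set n : ℕ := max N m with hn
  have h1 := hN (m + n) (le_trans (le_max_left N m) (Nat.le_add_left n m))
  have h2 := hBle n
  have h3 := hgrow n
  have hsqrt1 : (1 : ℝ) ≤ Real.sqrt c := by
    rw [show (1 : ℝ) = Real.sqrt 1 from Real.sqrt_one.symm]
    exact Real.sqrt_le_sqrt (by linarith)
  have hs1 : Real.sqrt c ^ (m + n) ≤ c ^ n := by
    have hle2 : m + n ≤ 2 * n := by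
      have : m ≤ n := le_max_right N m
      omega
    calc Real.sqrt c ^ (m + n) ≤ Real.sqrt c ^ (2 * n) := pow_le_pow_right₀ hsqrt1 hle2
      _ = (Real.sqrt c ^ 2) ^ n := by rw [pow_mul]
      _ = c ^ n := by rw [Real.sq_sqrt (by linarith : (0 : ℝ) ≤ c)]
  linarith
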